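/- There exists a hierarchical non-emitting Markov model φ of order 2 over the binary alphabet A = {0,1} such that for every n, every basic Markov model φ' of order n over A, there exists a length T and a string x^T ∈ A^T with p_ε(x^T | φ) ≠ p_m(x^T | φ'). (Lemma 1: ∃φ ∀φ' ∃x^T [p_ε(x^T|φ) ≠ p_m(x^T|φ')].) -/

import Mathlib

open Finset

/-- The suffix of `l` of length `min k l.length`. -/
def suff {A : Type*} (k : ℕ) (l : List A) : List A := l.drop (l.length - k)
/-- Basic Markov model of order `n`: probability of emitting the string `w`
after the history `h`, where each symbol is predicted from the context that is
the suffix of the full history of length `min n (history length)`. -/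
noncomputable def pm {A : Type*} (n : ℕ) (d : List A → A → ℝ) :
    List A → List A → ℝ
  | _, [] => 1
  | h, y :: w => d (suff n h) y * pm n d (h ++ [y]) w
/-- Hierarchical non-emitting Markov model of order `n` with emitting
transition probabilities `d` and non-emitting parameters `lam` (with
`lam [] = 1`): probability of emitting the string `w` from state `x`.
From a nonempty state `x`, with probability `lam x` it emits `y` via `d x y`
and moves to the suffix of `x ++ [y]` of length `min (|x|+1) n`; with
probability `1 - lam x` it moves to the suffix `x.tail` without emitting. -/
noncomputable def pe {A : Type*} (n : ℕ) (d : List A → A → ℝ) (lam : List A → ℝ) :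
    List A → List A → ℝ
  | _, [] => 1
  | [], y :: w => lam [] * d [] y * pe n d lam (suff n [y]) w
  | a :: x, y :: w =>
      lam (a :: x) * d (a :: x) y * pe n d lam (suff n ((a :: x) ++ [y])) w
      + (1 - lam (a :: x)) * pe n d lam x (y :: w)
termination_by x w => (w.length, x.length)
/-- Validity of an order-`n` basic Markov model: a conditional probability
distribution on `A` for every context of length at most `n`. -/
def IsBasic {A : Type*} [Fintype A] (n : ℕ) (d : List A → A → ℝ) : Prop :=
  ∀ c : List A, c.length ≤ n →
    (∀ y : A, 0 ≤ d c y) ∧ (∑ y : A, d c y = 1)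
/-- Validity of an order-`n` hierarchical non-emitting Markov model: emitting
distributions for every state of length at most `n`, non-emitting parameters
in `[0,1]`, and `λ₀(ε) = 1`. -/
def IsNonEmit {A : Type*} [Fintype A] (n : ℕ) (d : List A → A → ℝ)
    (lam : List A → ℝ) : Prop :=
  (∀ c : List A, c.length ≤ n →
    (∀ y : A, 0 ≤ d c y) ∧ (∑ y : A, d c y = 1)) ∧
  (∀ c : List A, c.length ≤ n → 0 ≤ lam c ∧ lam c ≤ 1) ∧
  lam [] = 1

noncomputable def myd (c : List (Fin 2)) (y : Fin 2) : ℝ :=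
  if c.length ≤ 1 then 1/2 else if y = 1 then 1 else 0

noncomputable def mylam (c : List (Fin 2)) : ℝ := if c = [] then 1 else 1/2

noncomputable def V : ℕ → ℝ × ℝ
  | 0 => (1, 1)
  | m+1 => ((V m).1/4 + (V m).2/4, (V m).1/8 + 5*(V m).2/8)

def ones (m : ℕ) : List (Fin 2) := List.replicate m 1

lemma pe_ones : ∀ m : ℕ,
    pe 2 myd mylam [1] (ones m) = (V m).1 ∧
    pe 2 myd mylam [1, 1] (ones m) = (V m).2 := by
  intro m
  induction m with
  | zero => simp [ones, pe, V]
  | succ m ih =>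
    have h1 : ones (m+1) = 1 :: ones m := rfl
    have hemp : pe 2 myd mylam [] (1 :: ones m) = 1/2 * (V m).1 := by
      rw [pe]
      have : suff 2 [(1 : Fin 2)] = [1] := rfl
      rw [this, ih.1, mylam, myd]
      norm_num
    constructor
    · rw [h1, pe]
      have : suff 2 ([(1:Fin 2)] ++ [1]) = [1,1] := rfl
      rw [this, ih.2, hemp]
      simp only [mylam, myd, V, List.length_cons, List.length_nil]
      norm_num
      ring
    · rw [h1, pe]
      have : suff 2 ([(1:Fin 2),1] ++ [1]) = [1,1] := rfl
      rw [this, ih.2, pe]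
      have h2 : suff 2 ([(1:Fin 2)] ++ [1]) = [1,1] := rfl
      rw [h2, ih.2, hemp]
      simp [mylam, myd, V]
      ring

lemma pe_empty (m : ℕ) :
    pe 2 myd mylam [] (ones (m+1)) = (V m).1 / 2 := by
  have h1 : ones (m+1) = 1 :: ones m := rfl
  rw [h1, pe]
  have : suff 2 [(1 : Fin 2)] = [1] := rfl
  rw [this, (pe_ones m).1, mylam, myd]
  norm_num
  ring

lemma V_rec (m : ℕ) : (V (m+2)).1 = 7/8 * (V (m+1)).1 - 1/8 * (V m).1 := by
  show (V (m+2)).1 = _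
  simp only [V]
  ring

lemma V_det (m : ℕ) :
    (V (m+2)).1 * (V m).1 - (V (m+1)).1 ^ 2 = (1/8)^m * (1/16) := by
  induction m with
  | zero => simp only [V]; norm_num
  | succ m ih =>
    have key : (V (m+1+2)).1 * (V (m+1)).1 - (V (m+1+1)).1 ^ 2
        = (1/8) * ((V (m+2)).1 * (V m).1 - (V (m+1)).1 ^ 2) := by
      show (V (m+3)).1 * (V (m+1)).1 - (V (m+2)).1 ^ 2 = _
      simp only [V]
      ring
    rw [key, ih, pow_succ]
    ring

lemma suff_ones {n k : ℕ} (h : n ≤ k) : suff n (ones k) = ones n := by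
  simp only [suff, ones, List.length_replicate, List.drop_replicate]
  congr 1
  omega

lemma pm_append (n : ℕ) (d' : List (Fin 2) → Fin 2 → ℝ) :
    ∀ (w h : List (Fin 2)) (y : Fin 2),
      pm n d' h (w ++ [y]) = pm n d' h w * d' (suff n (h ++ w)) y := by
  intro w
  induction w with
  | nil => intro h y; simp [pm]
  | cons z w ih =>
    intro h y
    rw [List.cons_append, pm, pm, ih (h ++ [z]) y, List.append_assoc]
    ring_nf
    rfl


/-- Lemma 1: there exists a hierarchical non-emitting Markov model `φ` of
order 2 over the binary alphabet such that for every `n` and every basic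
Markov model `φ'` of order `n`, some string receives different probabilities
under `φ` and `φ'`. -/
theorem exists_nonemitting_not_markov :
    ∃ (d : List (Fin 2) → Fin 2 → ℝ) (lam : List (Fin 2) → ℝ),
      IsNonEmit 2 d lam ∧
      ∀ (n : ℕ) (d' : List (Fin 2) → Fin 2 → ℝ), IsBasic n d' →
        ∃ x : List (Fin 2), pe 2 d lam [] x ≠ pm n d' [] x := by

  refine ⟨myd, mylam, ⟨?_, ?_, ?_⟩, ?_⟩
  · intro c _
    constructor
    · intro y
      unfold myd
      split_ifs <;> norm_num
    · rw [Fin.sum_univ_two]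
      unfold myd
      split_ifs with h1 h2 h3 <;> simp_all <;> norm_num
  · intro c _
    unfold mylam
    split_ifs <;> norm_num
  · rfl
  · intro n d' _
    by_contra hcon
    push_neg at hcon
    set c := d' (ones n) 1 with hc
    have step : ∀ k, n ≤ k → pm n d' [] (ones (k+1)) = pm n d' [] (ones k) * c := by
      intro k hk
      have : ones (k+1) = ones k ++ [1] := List.replicate_succ'
      rw [this, pm_append, List.nil_append, suff_ones hk]
    have hpe : ∀ m : ℕ, (V m).1 / 2 = pm n d' [] (ones (m+1)) := by
      intro m
      rw [← pe_empty m]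
      exact hcon (ones (m+1))
    have e1 : (V n).1 / 2 * c = (V (n+1)).1 / 2 := by
      rw [hpe n, hpe (n+1), step (n+1) (by omega)]
    have e2 : (V (n+1)).1 / 2 * c = (V (n+2)).1 / 2 := by
      rw [hpe (n+1), hpe (n+2), step (n+2) (by omega)]
    have h1 : (V (n+1)).1 = (V n).1 * c := by linarith
    have h2 : (V (n+2)).1 = (V (n+1)).1 * c := by linarith
    have hd := V_det n
    have hp : (0:ℝ) < (1/8)^n * (1/16) := by positivity
    rw [h2, h1] at hd
    nlinarith [hd, hp]
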